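/- Let {v_i}_{i∈V} be vectors in a real inner product space, let ω : V → ℝ≥0 be weights with W := Σ_{i∈V} ω_i > 0, and suppose Σ_{{i,j}∈(V choose 2)} ω_i ω_j ‖v_i − v_j‖² ≤ 1. Then there exists a vertex i_0 ∈ V such that ω(B(i_0, 3/W)) ≥ W/2, where B(i, r) := {j ∈ V : ‖v_i − v_j‖² ≤ r²} and ω(S) := Σ_{u∈S} ω_u. -/

import Mathlib

open Finset

/-- if `Σ_{{i,j}} ωᵢωⱼ‖vᵢ−vⱼ‖² ≤ 1`, then some vertex `i₀` satisfies
`ω(B(i₀, 3/W)) ≥ W/2` where `B(i, r) = {j : ‖vᵢ − vⱼ‖² ≤ r²}`. -/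
theorem exists_heavy_ball
    {V : Type*} [Fintype V] [DecidableEq V]
    {F : Type*} [NormedAddCommGroup F] [InnerProductSpace ℝ F]
    (v : V → F) (ω : V → ℝ) (hω : ∀ i, 0 ≤ ω i)
    (W : ℝ) (hW : W = ∑ i, ω i) (hWpos : 0 < W)
    (hsum : (1 / 2) * (∑ i, ∑ j, ω i * ω j * ‖v i - v j‖ ^ 2) ≤ 1) :
    ∃ i₀ : V, W / 2 ≤
      ∑ j ∈ Finset.univ.filter (fun j => ‖v i₀ - v j‖ ^ 2 ≤ (3 / W) ^ 2), ω j := by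
  by_contra h
  push_neg at h
  have key : ∀ i, 9 / (2 * W) ≤ ∑ j, ω j * ‖v i - v j‖ ^ 2 := by
    intro i
    have hsplit : ∑ j ∈ univ.filter (fun j => ‖v i - v j‖ ^ 2 ≤ (3 / W) ^ 2), ω j
        + ∑ j ∈ univ.filter (fun j => ¬ ‖v i - v j‖ ^ 2 ≤ (3 / W) ^ 2), ω j = W := by
      rw [Finset.sum_filter_add_sum_filter_not univ
        (fun j => ‖v i - v j‖ ^ 2 ≤ (3 / W) ^ 2), hW]
    have h1 : W / 2 ≤ ∑ j ∈ univ.filter (fun j => ¬ ‖v i - v j‖ ^ 2 ≤ (3 / W) ^ 2), ω j := by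
      have := h i
      linarith
    have h2 : (3 / W) ^ 2 * (W / 2)
        ≤ ∑ j ∈ univ.filter (fun j => ¬ ‖v i - v j‖ ^ 2 ≤ (3 / W) ^ 2),
            ω j * ‖v i - v j‖ ^ 2 := by
      calc (3 / W) ^ 2 * (W / 2)
          ≤ (3 / W) ^ 2 * ∑ j ∈ univ.filter (fun j => ¬ ‖v i - v j‖ ^ 2 ≤ (3 / W) ^ 2), ω j :=
            by apply mul_le_mul_of_nonneg_left h1; positivity
        _ = ∑ j ∈ univ.filter (fun j => ¬ ‖v i - v j‖ ^ 2 ≤ (3 / W) ^ 2),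
              ω j * (3 / W) ^ 2 := by rw [Finset.mul_sum]; simp [mul_comm]
        _ ≤ _ := by
            apply Finset.sum_le_sum
            intro j hj
            simp only [Finset.mem_filter, not_le] at hj
            exact mul_le_mul_of_nonneg_left hj.2.le (hω j)
    have h3 : ∑ j ∈ univ.filter (fun j => ¬ ‖v i - v j‖ ^ 2 ≤ (3 / W) ^ 2),
        ω j * ‖v i - v j‖ ^ 2 ≤ ∑ j, ω j * ‖v i - v j‖ ^ 2 := by
      apply Finset.sum_le_sum_of_subset_of_nonneg (Finset.filter_subset _ _)
      intro j _ _
      exact mul_nonneg (hω j) (sq_nonneg _)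
    have heq : (3 / W) ^ 2 * (W / 2) = 9 / (2 * W) := by field_simp; ring
    linarith
  have h4 : (9 : ℝ) / 2 ≤ ∑ i, ∑ j, ω i * ω j * ‖v i - v j‖ ^ 2 := by
    have : ∀ i, ω i * (9 / (2 * W)) ≤ ∑ j, ω i * ω j * ‖v i - v j‖ ^ 2 := by
      intro i
      calc ω i * (9 / (2 * W)) ≤ ω i * ∑ j, ω j * ‖v i - v j‖ ^ 2 :=
            mul_le_mul_of_nonneg_left (key i) (hω i)
        _ = ∑ j, ω i * ω j * ‖v i - v j‖ ^ 2 := by rw [Finset.mul_sum]; ring_nf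
    calc (9 : ℝ) / 2 = W * (9 / (2 * W)) := by field_simp
      _ = ∑ i, ω i * (9 / (2 * W)) := by rw [hW, Finset.sum_mul]
      _ ≤ _ := Finset.sum_le_sum fun i _ => this i
  linarith
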